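/- Let 0 ≤ S ≤ T be positive operators on a real Banach lattice with T ideal irreducible. If T*x₀* = λx₀* for some x₀* > 0 and Sx₀ ≥ λx₀ for some x₀ > 0, then T = S. -/

import Mathlib

open scoped ENNReal

variable {X : Type*}

def IsPositiveOp [NormedAddCommGroup X] [Lattice X] [HasSolidNorm X] [IsOrderedAddMonoid X] [NormedSpace ℝ X]
    (T : X →L[ℝ] X) : Prop := ∀ x : X, 0 ≤ x → 0 ≤ T x

def IsClosedIdeal [NormedAddCommGroup X] [Lattice X] [HasSolidNorm X] [IsOrderedAddMonoid X] [NormedSpace ℝ X]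
    (J : Submodule ℝ X) : Prop :=
  IsClosed (J : Set X) ∧ ∀ x y : X, |y| ≤ |x| → x ∈ J → y ∈ J

def IdealIrreducible [NormedAddCommGroup X] [Lattice X] [HasSolidNorm X] [IsOrderedAddMonoid X] [NormedSpace ℝ X]
    (T : X →L[ℝ] X) : Prop :=
  ∀ J : Submodule ℝ X, IsClosedIdeal J → (∀ x ∈ J, T x ∈ J) → J = ⊥ ∨ J = ⊤

/-- A band: a solid submodule closed under existing suprema. -/
def IsBand [NormedAddCommGroup X] [Lattice X] [HasSolidNorm X] [IsOrderedAddMonoid X] [NormedSpace ℝ X]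
    (J : Submodule ℝ X) : Prop :=
  (∀ x y : X, |y| ≤ |x| → x ∈ J → y ∈ J) ∧
    ∀ (A : Set X) (x : X), A ⊆ (J : Set X) → IsLUB A x → x ∈ J

def BandIrreducible [NormedAddCommGroup X] [Lattice X] [HasSolidNorm X] [IsOrderedAddMonoid X] [NormedSpace ℝ X]
    (T : X →L[ℝ] X) : Prop :=
  ∀ J : Submodule ℝ X, IsBand J → (∀ x ∈ J, T x ∈ J) → J = ⊥ ∨ J = ⊤

def QuasiInterior [NormedAddCommGroup X] [Lattice X] [HasSolidNorm X] [IsOrderedAddMonoid X] [NormedSpace ℝ X]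
    (x : X) : Prop :=
  closure {y : X | ∃ c : ℝ, |y| ≤ c • x} = Set.univ

/-- A weak (order) unit. -/
def WeakUnit [NormedAddCommGroup X] [Lattice X] [HasSolidNorm X] [IsOrderedAddMonoid X] [NormedSpace ℝ X]
    (x : X) : Prop := 0 < x ∧ ∀ y : X, |y| ⊓ x = 0 → y = 0

def IsPositiveFunc [NormedAddCommGroup X] [Lattice X] [HasSolidNorm X] [IsOrderedAddMonoid X] [NormedSpace ℝ X]
    (f : StrongDual ℝ X) : Prop := ∀ x : X, 0 ≤ x → 0 ≤ f x

def StrictlyPositiveFunc [NormedAddCommGroup X] [Lattice X] [HasSolidNorm X] [IsOrderedAddMonoid X] [NormedSpace ℝ X]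
    (f : StrongDual ℝ X) : Prop := ∀ x : X, 0 < x → 0 < f x

noncomputable def adjOp [NormedAddCommGroup X] [Lattice X] [HasSolidNorm X] [IsOrderedAddMonoid X] [NormedSpace ℝ X]
    (T : X →L[ℝ] X) : StrongDual ℝ X →L[ℝ] StrongDual ℝ X :=
  (ContinuousLinearMap.compL ℝ X X ℝ).flip T

/-- `T` is σ-order continuous: `x_n ↓ 0` implies `T x_n ↓ 0`. -/
def SigmaOrderContinuousOp [NormedAddCommGroup X] [Lattice X] [HasSolidNorm X] [IsOrderedAddMonoid X] [NormedSpace ℝ X]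
    (T : X →L[ℝ] X) : Prop :=
  ∀ u : ℕ → X, Antitone u → IsGLB (Set.range u) 0 →
    IsGLB (Set.range fun n => T (u n)) 0

/-- A σ-order continuous functional. -/
def SigmaOrderContinuousFunc [NormedAddCommGroup X] [Lattice X] [HasSolidNorm X] [IsOrderedAddMonoid X] [NormedSpace ℝ X]
    (f : StrongDual ℝ X) : Prop :=
  ∀ u : ℕ → X, Antitone u → IsGLB (Set.range u) 0 →
    Filter.Tendsto (fun n => f (u n)) Filter.atTop (nhds 0)

/-- A set is relatively weakly compact. -/
def RelWeaklyCompact [NormedAddCommGroup X] [Lattice X] [HasSolidNorm X] [IsOrderedAddMonoid X] [NormedSpace ℝ X]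
    (s : Set X) : Prop :=
  IsCompact (closure ((toWeakSpace ℝ X) '' s))

/-- `T` is order weakly compact: `T[0,x]` is relatively weakly compact for all `x > 0`. -/
def OrderWeaklyCompactOp [NormedAddCommGroup X] [Lattice X] [HasSolidNorm X] [IsOrderedAddMonoid X] [NormedSpace ℝ X]
    (T : X →L[ℝ] X) : Prop :=
  ∀ x : X, 0 < x → RelWeaklyCompact (T '' Set.Icc 0 x)

section Aux
variable {X : Type*} [NormedAddCommGroup X] [Lattice X] [HasSolidNorm X] [IsOrderedAddMonoid X] [NormedSpace ℝ X]

lemma myContAbs : Continuous (fun x : X => |x|) := continuous_id.sup continuous_neg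

lemma pow2_semiclosed : ∀ (m : ℕ) (x : X), 0 ≤ 2 ^ m • x → 0 ≤ x := by
  intro m
  induction m with
  | zero => intro x h; simpa using h
  | succ m ih =>
    intro x h
    have h2 : (2:ℕ) ^ (m+1) • x = 2 ^ m • (2 • x) := by
      rw [← mul_nsmul]; ring_nf
    exact nsmul_two_semiclosed (ih _ (by rwa [h2] at h))

lemma my_smul_nonneg {c : ℝ} (hc : 0 ≤ c) {x : X} (hx : 0 ≤ x) : 0 ≤ c • x := by
  set q : ℕ → ℝ := fun m => (⌈c * 2 ^ m⌉₊ : ℝ) / 2 ^ m with hq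
  have hqpos : ∀ m, 0 ≤ q m • x := by
    intro m
    apply pow2_semiclosed m
    have : (2:ℕ) ^ m • (q m • x) = (⌈c * 2 ^ m⌉₊ : ℕ) • x := by
      rw [← Nat.cast_smul_eq_nsmul ℝ, ← Nat.cast_smul_eq_nsmul ℝ, smul_smul, hq]
      congr 1
      push_cast
      field_simp
    rw [this]
    exact nsmul_nonneg hx _
  have hqt : Filter.Tendsto q Filter.atTop (nhds c) := by
    have hub : ∀ m, c ≤ q m := by
      intro m
      rw [hq, le_div_iff₀ (by positivity)]
      exact Nat.le_ceil _
    have hlb : ∀ m, q m ≤ c + (1 / 2) ^ m := by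
      intro m
      rw [hq, div_le_iff₀ (by positivity)]
      have := (Nat.ceil_lt_add_one (by positivity : (0:ℝ) ≤ c * 2 ^ m)).le
      calc (⌈c * 2 ^ m⌉₊ : ℝ) ≤ c * 2 ^ m + 1 := this
        _ = (c + (1/2) ^ m) * 2 ^ m := by
              have h1 : ((1:ℝ)/2) ^ m * 2 ^ m = 1 := by rw [← mul_pow]; norm_num
              ring_nf
              ring_nf at h1
              nlinarith [h1]
    have h1 : Filter.Tendsto (fun m : ℕ => c + (1/2:ℝ) ^ m) Filter.atTop (nhds (c + 0)) :=
      tendsto_const_nhds.add (tendsto_pow_atTop_nhds_zero_of_lt_one (by norm_num) (by norm_num))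
    rw [add_zero] at h1
    exact tendsto_of_tendsto_of_tendsto_of_le_of_le tendsto_const_nhds h1 hub hlb
  have hxt : Filter.Tendsto (fun m => q m • x) Filter.atTop (nhds (c • x)) :=
    hqt.smul tendsto_const_nhds
  exact ge_of_tendsto' hxt hqpos

lemma my_smul_mono {c : ℝ} (hc : 0 ≤ c) {x y : X} (h : x ≤ y) : c • x ≤ c • y := by
  have := my_smul_nonneg hc (sub_nonneg.2 h)
  rwa [smul_sub, sub_nonneg] at this

lemma my_abs_smul_le (c : ℝ) (x : X) : |c • x| ≤ |c| • |x| := by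
  have key : ∀ z : X, c • z ≤ |c| • |z| := by
    intro z
    rcases le_or_gt 0 c with h | h
    · calc c • z ≤ c • |z| := my_smul_mono h (le_abs_self z)
        _ = |c| • |z| := by rw [abs_of_nonneg h]
    · calc c • z = (-c) • (-z) := by rw [neg_smul_neg]
        _ ≤ (-c) • |z| := my_smul_mono (by linarith) (neg_le_abs z)
        _ = |c| • |z| := by rw [abs_of_neg h]
  have h2 := key (-x)
  rw [abs_neg] at h2
  rw [smul_neg, ← neg_smul] at h2
  calc |c • x| = (c • x) ⊔ (-(c • x)) := rfl
    _ ≤ |c| • |x| := sup_le (key x) (by rwa [← neg_smul])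

lemma my_posPart_le_abs (x : X) : x⁺ ≤ |x| := by
  rw [posPart_def]
  exact sup_le (le_abs_self x) (abs_nonneg x)

lemma my_negPart_le_abs (x : X) : x⁻ ≤ |x| := by
  rw [negPart_def]
  exact sup_le (neg_le_abs x) (abs_nonneg x)

end Aux

theorem stmt15 [NormedAddCommGroup X] [Lattice X] [HasSolidNorm X] [IsOrderedAddMonoid X] [NormedSpace ℝ X]
    (hdim : 1 < Module.rank ℝ X)
    (S T : X →L[ℝ] X) (hS : IsPositiveOp S)
    (hST : ∀ x : X, 0 ≤ x → S x ≤ T x) (hT : IsPositiveOp T)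
    (hirr : IdealIrreducible T)
    (l : ℝ) (f₀ : StrongDual ℝ X) (hf₀ : IsPositiveFunc f₀) (hf₀0 : f₀ ≠ 0)
    (heig : adjOp T f₀ = l • f₀)
    (x₀ : X) (hx₀ : 0 < x₀) (hge : l • x₀ ≤ S x₀) :
    T = S := by
  classical
  -- Basic monotonicity facts
  have hTmono : ∀ a b : X, a ≤ b → T a ≤ T b := fun a b h => by
    have := hT (b - a) (sub_nonneg.2 h)
    rw [map_sub] at this
    exact sub_nonneg.1 this
  have hfmono : ∀ a b : X, a ≤ b → f₀ a ≤ f₀ b := fun a b h => by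
    have := hf₀ (b - a) (sub_nonneg.2 h)
    rw [map_sub] at this
    linarith
  have habsT : ∀ y : X, |T y| ≤ T |y| := by
    intro y
    have h1 : T y ≤ T |y| := hTmono _ _ (le_abs_self y)
    have h2 : -(T y) ≤ T |y| := by
      rw [← map_neg]
      exact hTmono _ _ (neg_le_abs y)
    calc |T y| = T y ⊔ (-(T y)) := rfl
      _ ≤ T |y| := sup_le h1 h2
  have hTe : ∀ x : X, f₀ (T x) = l * f₀ x := by
    intro x
    have := congrArg (fun g : StrongDual ℝ X => g x) heig
    simpa [adjOp] using this
  -- f₀ is strictly positive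
  have hN : ∀ x : X, 0 < x → 0 < f₀ x := by
    intro x hx
    by_contra hcon
    have hfx : f₀ x = 0 := le_antisymm (not_lt.1 hcon) (hf₀ x hx.le)
    set N : Submodule ℝ X :=
      { carrier := {z : X | f₀ |z| = 0}
        add_mem' := by
          intro a b ha hb
          simp only [Set.mem_setOf_eq] at *
          have h1 : f₀ |a + b| ≤ f₀ (|a| + |b|) := hfmono _ _ (abs_add_le a b)
          rw [map_add, ha, hb] at h1
          have h2 : 0 ≤ f₀ |a + b| := hf₀ _ (abs_nonneg _)
          linarith
        zero_mem' := by simp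
        smul_mem' := by
          intro c a ha
          simp only [Set.mem_setOf_eq] at *
          have h1 : f₀ |c • a| ≤ f₀ (|c| • |a|) := hfmono _ _ (my_abs_smul_le c a)
          rw [map_smul, ha, smul_eq_mul, mul_zero] at h1
          have h2 : 0 ≤ f₀ |c • a| := hf₀ _ (abs_nonneg _)
          linarith } with hNdef
    have hNci : IsClosedIdeal N := by
      constructor
      · have : (N : Set X) = (fun z : X => f₀ |z|) ⁻¹' {0} := rfl
        rw [this]
        exact isClosed_singleton.preimage (f₀.continuous.comp myContAbs)
      · intro a b hab ha
        have h1 : f₀ |b| ≤ f₀ |a| := hfmono _ _ hab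
        have h2 : 0 ≤ f₀ |b| := hf₀ _ (abs_nonneg _)
        have : f₀ |a| = 0 := ha
        exact le_antisymm (by linarith) h2
    have hNinv : ∀ z ∈ N, T z ∈ N := by
      intro z hz
      have hz' : f₀ |z| = 0 := hz
      have h1 : f₀ |T z| ≤ f₀ (T |z|) := hfmono _ _ (habsT z)
      rw [hTe, hz', mul_zero] at h1
      exact le_antisymm h1 (hf₀ _ (abs_nonneg _))
    rcases hirr N hNci hNinv with hbot | htop
    · have hxN : x ∈ N := by
        show f₀ |x| = 0
        rw [abs_of_nonneg hx.le, hfx]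
      rw [hbot, Submodule.mem_bot] at hxN
      exact absurd hxN hx.ne'
    · apply hf₀0
      ext z
      have hz : ∀ w : X, f₀ |w| = 0 := by
        intro w
        have hwN : w ∈ N := by rw [htop]; trivial
        exact hwN
      have hp : f₀ z⁺ = 0 := by
        have h1 : f₀ z⁺ ≤ f₀ |z| := hfmono _ _ (my_posPart_le_abs z)
        have h2 : 0 ≤ f₀ z⁺ := hf₀ _ (posPart_nonneg _)
        rw [hz] at h1
        linarith
      have hn : f₀ z⁻ = 0 := by
        have h1 : f₀ z⁻ ≤ f₀ |z| := hfmono _ _ (my_negPart_le_abs z)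
        have h2 : 0 ≤ f₀ z⁻ := hf₀ _ (negPart_nonneg _)
        rw [hz] at h1
        linarith
      have : z = z⁺ - z⁻ := (posPart_sub_negPart z).symm
      rw [show f₀ z = f₀ (z⁺ - z⁻) by rw [← this], map_sub, hp, hn]
      simp
  -- T x₀ = l • x₀ and S x₀ = l • x₀
  have hgeT : l • x₀ ≤ T x₀ := le_trans hge (hST x₀ hx₀.le)
  have hfT : f₀ (T x₀ - l • x₀) = 0 := by
    rw [map_sub, hTe, map_smul, smul_eq_mul, sub_self]
  have hTx₀ : T x₀ = l • x₀ := by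
    by_contra hne
    have hpos : 0 < T x₀ - l • x₀ :=
      lt_of_le_of_ne (sub_nonneg.2 hgeT) (fun h => hne (by rw [← sub_eq_zero]; exact h.symm))
    exact absurd hfT (ne_of_gt (hN _ hpos))
  have hSx₀ : S x₀ = l • x₀ := by
    have h1 : S x₀ ≤ T x₀ := hST x₀ hx₀.le
    rw [hTx₀] at h1
    exact le_antisymm h1 hge
  -- the closed ideal generated by x₀ is everything
  set I : Submodule ℝ X :=
    { carrier := {y : X | ∃ c : ℝ, |y| ≤ c • x₀}
      add_mem' := by
        rintro a b ⟨ca, hca⟩ ⟨cb, hcb⟩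
        exact ⟨ca + cb, le_trans (abs_add_le a b) (by rw [add_smul]; exact add_le_add hca hcb)⟩
      zero_mem' := ⟨0, by simp⟩
      smul_mem' := by
        rintro c a ⟨ca, hca⟩
        refine ⟨|c| * ca, ?_⟩
        calc |c • a| ≤ |c| • |a| := my_abs_smul_le c a
          _ ≤ |c| • (ca • x₀) := my_smul_mono (abs_nonneg c) hca
          _ = (|c| * ca) • x₀ := smul_smul _ _ _ } with hIdef
  have hImem : ∀ y : X, y ∈ I ↔ ∃ c : ℝ, |y| ≤ c • x₀ := fun y => Iff.rfl
  set J : Submodule ℝ X := I.topologicalClosure with hJdef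
  have hJcoe : (J : Set X) = closure (I : Set X) := rfl
  have hJci : IsClosedIdeal J := by
    constructor
    · exact I.isClosed_topologicalClosure
    · intro a b hab ha
      have haJ : a ∈ closure (I : Set X) := ha
      have hcont : Continuous (fun z : X => (b ⊓ |z|) ⊔ (-|z|)) :=
        (continuous_const.inf myContAbs).sup myContAbs.neg
      have hmaps : ∀ z ∈ (I : Set X), ((b ⊓ |z|) ⊔ (-|z|)) ∈ (I : Set X) := by
        rintro z ⟨c, hc⟩
        refine ⟨c, le_trans ?_ hc⟩
        have hle : (b ⊓ |z|) ⊔ (-|z|) ≤ |z| :=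
          sup_le inf_le_right ((neg_nonpos.2 (abs_nonneg z)).trans (abs_nonneg z))
        have hge' : -|z| ≤ (b ⊓ |z|) ⊔ (-|z|) := le_sup_right
        calc |(b ⊓ |z|) ⊔ (-|z|)| = ((b ⊓ |z|) ⊔ (-|z|)) ⊔ (-((b ⊓ |z|) ⊔ (-|z|))) := rfl
          _ ≤ |z| := sup_le hle (neg_le.2 hge')
      have hb : ((b ⊓ |a|) ⊔ (-|a|)) ∈ closure (I : Set X) := by
        have := map_mem_closure (f := fun z : X => (b ⊓ |z|) ⊔ (-|z|)) hcont haJ hmaps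
        exact this
      have heq : (b ⊓ |a|) ⊔ (-|a|) = b := by
        rw [inf_eq_left.2 (le_trans (le_abs_self b) hab),
            sup_eq_left.2 (le_trans (neg_le_neg hab) (neg_le.mpr (neg_le_abs b)))]
      rwa [heq] at hb
  have hJinv : ∀ z ∈ J, T z ∈ J := by
    intro z hz
    have hz' : z ∈ closure (I : Set X) := hz
    refine map_mem_closure T.continuous hz' ?_
    rintro w ⟨c, hc⟩
    refine ⟨c * l, ?_⟩
    calc |T w| ≤ T |w| := habsT w
      _ ≤ T (c • x₀) := hTmono _ _ hc
      _ = c • T x₀ := map_smul T c x₀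
      _ = (c * l) • x₀ := by rw [hTx₀, smul_smul]
  have hJtop : J = ⊤ := by
    rcases hirr J hJci hJinv with hbot | htop
    · exfalso
      have hx₀I : x₀ ∈ I := ⟨1, by rw [abs_of_nonneg hx₀.le, one_smul]⟩
      have hx₀J : x₀ ∈ J := I.le_topologicalClosure hx₀I
      rw [hbot, Submodule.mem_bot] at hx₀J
      exact hx₀.ne' hx₀J
    · exact htop
  have hdense : Dense (I : Set X) := by
    have hcl : closure (I : Set X) = Set.univ := by
      have := congrArg (fun K : Submodule ℝ X => (K : Set X)) hJtop
      simpa [hJdef] using this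
    rw [dense_iff_closure_eq, hcl]
  -- the functional g := f₀ ∘ (T - S) vanishes
  set g : X →L[ℝ] ℝ := f₀.comp (T - S) with hgdef
  have hgval : ∀ x : X, g x = f₀ (T x - S x) := fun x => rfl
  have hgpos : ∀ x : X, 0 ≤ x → 0 ≤ g x := by
    intro x hx
    rw [hgval]
    exact hf₀ _ (sub_nonneg.2 (hST x hx))
  have hgx₀ : g x₀ = 0 := by
    rw [hgval, hTx₀, hSx₀, sub_self, map_zero]
  have hgmono : ∀ a b : X, a ≤ b → g a ≤ g b := fun a b h => by
    have := hgpos (b - a) (sub_nonneg.2 h)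
    rw [map_sub] at this
    linarith
  have hgI : ∀ y ∈ (I : Set X), g y = 0 := by
    rintro y ⟨c, hc⟩
    have hcx : g (c • x₀) = 0 := by rw [map_smul, hgx₀, smul_eq_mul, mul_zero]
    have hp : g y⁺ = 0 := by
      have h1 : g y⁺ ≤ g (c • x₀) := hgmono _ _ (le_trans (my_posPart_le_abs y) hc)
      have h2 : 0 ≤ g y⁺ := hgpos _ (posPart_nonneg _)
      rw [hcx] at h1; linarith
    have hn : g y⁻ = 0 := by
      have h1 : g y⁻ ≤ g (c • x₀) := hgmono _ _ (le_trans (my_negPart_le_abs y) hc)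
      have h2 : 0 ≤ g y⁻ := hgpos _ (negPart_nonneg _)
      rw [hcx] at h1; linarith
    calc g y = g (y⁺ - y⁻) := by rw [posPart_sub_negPart]
      _ = g y⁺ - g y⁻ := map_sub g _ _
      _ = 0 := by rw [hp, hn, sub_self]
  have hg0 : ∀ x : X, g x = 0 := by
    intro x
    have hfeq : (⇑g : X → ℝ) = fun _ => 0 :=
      Continuous.ext_on hdense g.continuous continuous_const hgI
    exact congrFun hfeq x
  -- conclude
  have hTS : ∀ x : X, 0 ≤ x → T x = S x := by
    intro x hx
    by_contra hne
    have hpos : 0 < T x - S x :=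
      lt_of_le_of_ne (sub_nonneg.2 (hST x hx)) (fun h => hne (sub_eq_zero.1 h.symm))
    have := hN _ hpos
    rw [← hgval, hg0] at this
    exact lt_irrefl 0 this
  ext x
  have hxp := hTS x⁺ (posPart_nonneg _)
  have hxn := hTS x⁻ (negPart_nonneg _)
  calc T x = T (x⁺ - x⁻) := by rw [posPart_sub_negPart]
    _ = T x⁺ - T x⁻ := map_sub T _ _
    _ = S x⁺ - S x⁻ := by rw [hxp, hxn]
    _ = S (x⁺ - x⁻) := (map_sub S _ _).symm
    _ = S x := by rw [posPart_sub_negPart]
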